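/- The following four conditions are equivalent: (i) there exists a Baire sup-measurable function F : ℝ × ℝ → ℝ which does not have the Baire property; (ii) there exists a function F : ℝ × ℝ → ℝ which does not have the Baire property such that for every Borel measurable f : ℝ → ℝ the function x ↦ F(x, f(x)) has the Baire property; (iii) there exists a set A ⊆ ℝ × ℝ which does not have the Baire property such that for every Borel measurable f : ℝ → ℝ the set {x ∈ ℝ : (x, f(x)) ∈ A} has the Baire property; (iv) there exists a Baire sup-measurable function F : ℝ × ℝ → ℝ taking only the values 0 and 1 which does not have the Baire property. -/

import Mathlib

open scoped symmDiff
open Topology Filter Set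

/-- A set has the Baire property if it equals the symmetric difference of an
open set and a meager set. -/
def HasBaireProperty {X : Type*} [TopologicalSpace X] (S : Set X) : Prop :=
  ∃ U M : Set X, IsOpen U ∧ IsMeagre M ∧ S = U ∆ M

/-- A function has the Baire property if the preimage of every open set has
the Baire property. -/
def BaireFunction {X Y : Type*} [TopologicalSpace X] [TopologicalSpace Y] (g : X → Y) : Prop :=
  ∀ U : Set Y, IsOpen U → HasBaireProperty (g ⁻¹' U)

/-- `F : ℝ × ℝ → ℝ` is Baire sup-measurable if for every `f : ℝ → ℝ` with the Baire
property, the function `x ↦ F (x, f x)` has the Baire property. -/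
def BaireSupMeasurable (F : ℝ × ℝ → ℝ) : Prop :=
  ∀ f : ℝ → ℝ, BaireFunction f → BaireFunction (fun x => F (x, f x))

lemma hbp_iff {X : Type*} [TopologicalSpace X] {s : Set X} :
    HasBaireProperty s ↔ BaireMeasurableSet s := by
  constructor
  · rintro ⟨U, M, hU, hM, rfl⟩
    rw [Set.symmDiff_def]
    exact (hU.baireMeasurableSet.diff hM.baireMeasurableSet).union
      (hM.baireMeasurableSet.diff hU.baireMeasurableSet)
  · intro h
    obtain ⟨u, hu, hsu⟩ := h.residualEq_isOpen
    refine ⟨u, s ∆ u, hu, ?_, by rw [symmDiff_comm s u, symmDiff_symmDiff_cancel_left]⟩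
    rw [IsMeagre]
    refine mem_of_superset (eventuallyEq_set.1 hsu) ?_
    intro x hx
    simp only [Set.mem_setOf_eq] at hx
    simp only [Set.mem_compl_iff, Set.mem_symmDiff]
    tauto

lemma hbp_congr {X : Type*} [TopologicalSpace X] {s t : Set X}
    (h : HasBaireProperty s) (hm : IsMeagre (s ∆ t)) : HasBaireProperty t := by
  rw [hbp_iff] at h ⊢
  refine h.congr (eventuallyEq_set.2 ?_)
  rw [IsMeagre] at hm
  filter_upwards [hm] with x hx
  simp only [Set.mem_compl_iff, Set.mem_symmDiff] at hx
  tauto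

lemma baireFunction_of_measurable {f : ℝ → ℝ} (hf : Measurable f) : BaireFunction f := by
  intro U hU
  rw [hbp_iff]
  exact (hf hU.measurableSet).baireMeasurableSet

lemma exists_measurable_eq {f : ℝ → ℝ} (hf : BaireFunction f) :
    ∃ g : ℝ → ℝ, Measurable g ∧ IsMeagre {x | f x ≠ g x} := by
  classical
  obtain ⟨B, hBc, -, hB⟩ := TopologicalSpace.exists_countable_basis ℝ
  haveI := hBc.to_subtype
  have h2 : ∀ b : B, ∃ u : Set ℝ, IsOpen u ∧ f ⁻¹' (b : Set ℝ) =ᵇ u := fun b =>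
    (hbp_iff.1 (hf b (hB.isOpen b.2))).residualEq_isOpen
  choose u hu hfu using h2
  have hres : (⋂ b : B, {x : ℝ | x ∈ f ⁻¹' (b : Set ℝ) ↔ x ∈ u b}) ∈ residual ℝ :=
    (countable_iInter_mem).2 fun b => eventuallyEq_set.1 (hfu b)
  obtain ⟨t, hts, htGδ, htd⟩ := mem_residual.1 hres
  set g : ℝ → ℝ := fun x => if x ∈ t then f x else 0 with hg
  refine ⟨g, ?_, ?_⟩
  · apply measurable_of_isOpen
    intro s hs
    rw [hB.open_eq_sUnion' hs, Set.preimage_sUnion]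
    apply MeasurableSet.biUnion (hBc.mono (Set.sep_subset _ _))
    rintro b ⟨hb, -⟩
    have hbeq : g ⁻¹' b = (t ∩ u ⟨b, hb⟩) ∪ (tᶜ ∩ {x : ℝ | (0:ℝ) ∈ b}) := by
      ext x
      by_cases hx : x ∈ t
      · have hiff : f x ∈ b ↔ x ∈ u ⟨b, hb⟩ := by
          have h3 := hts hx
          rw [Set.mem_iInter] at h3
          exact h3 ⟨b, hb⟩
        simp [g, hx, hiff]
      · simp [g, hx]
    rw [hbeq]
    have hconst : MeasurableSet {x : ℝ | (0:ℝ) ∈ b} := by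
      by_cases h0 : (0:ℝ) ∈ b <;> simp [h0]
    exact (htGδ.measurableSet.inter (hu ⟨b, hb⟩).measurableSet).union
      (htGδ.measurableSet.compl.inter hconst)
  · refine (fun hs hts => IsMeagre.mono (s := tᶜ) hts hs) ?_ ?_
    · rw [IsMeagre, compl_compl]; exact residual_of_dense_Gδ htGδ htd
    · intro x hx hxt
      exact hx (by simp [g, hxt])

theorem stmt_0 : List.TFAE
    [ -- (i) a Baire sup-measurable function without the Baire property
      ∃ F : ℝ × ℝ → ℝ, BaireSupMeasurable F ∧ ¬ BaireFunction F,
      -- (ii) a function without the Baire property whose superpositions with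
      -- Borel measurable functions have the Baire property
      ∃ F : ℝ × ℝ → ℝ, ¬ BaireFunction F ∧
        ∀ f : ℝ → ℝ, Measurable f → BaireFunction (fun x => F (x, f x)),
      -- (iii) a set without the Baire property whose sections along Borel
      -- measurable functions have the Baire property
      ∃ A : Set (ℝ × ℝ), ¬ HasBaireProperty A ∧
        ∀ f : ℝ → ℝ, Measurable f → HasBaireProperty {x : ℝ | (x, f x) ∈ A},
      -- (iv) a {0,1}-valued Baire sup-measurable function without the Baire property
      ∃ F : ℝ × ℝ → ℝ, (∀ p : ℝ × ℝ, F p = 0 ∨ F p = 1) ∧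
        BaireSupMeasurable F ∧ ¬ BaireFunction F ] := by
  classical
  tfae_have 1 → 2 := by
    rintro ⟨F, hsup, hnb⟩
    exact ⟨F, hnb, fun f hf => hsup f (baireFunction_of_measurable hf)⟩
  tfae_have 2 → 3 := by
    rintro ⟨F, hnb, hsec⟩
    rw [BaireFunction] at hnb
    push_neg at hnb
    obtain ⟨U, hU, hA⟩ := hnb
    exact ⟨F ⁻¹' U, hA, fun f hf => hsec f hf U hU⟩
  tfae_have 3 → 4 := by
    rintro ⟨A, hA, hsec⟩
    refine ⟨fun p => if p ∈ A then 1 else 0, fun p => by by_cases hp : p ∈ A <;> simp [hp], ?_, ?_⟩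
    · intro f hf U hU
      obtain ⟨g, hg, hmg⟩ := exists_measurable_eq hf
      have hS : HasBaireProperty {x : ℝ | (x, f x) ∈ A} := by
        refine hbp_congr (hsec g hg) (hmg.mono ?_)
        intro x hx
        simp only [Set.mem_symmDiff, Set.mem_setOf_eq] at hx
        simp only [Set.mem_setOf_eq, ne_eq]
        intro heq
        rw [heq] at hx
        tauto
      rw [hbp_iff] at hS ⊢
      by_cases h1 : (1:ℝ) ∈ U <;> by_cases h0 : (0:ℝ) ∈ U
      · have : (fun x => if (x, f x) ∈ A then (1:ℝ) else 0) ⁻¹' U = Set.univ := by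
          ext x; by_cases hx : (x, f x) ∈ A <;> simp [hx, h0, h1]
        rw [this]; exact isOpen_univ.baireMeasurableSet
      · have : (fun x => if (x, f x) ∈ A then (1:ℝ) else 0) ⁻¹' U
            = {x : ℝ | (x, f x) ∈ A} := by
          ext x; by_cases hx : (x, f x) ∈ A <;> simp [hx, h0, h1]
        rw [this]; exact hS
      · have : (fun x => if (x, f x) ∈ A then (1:ℝ) else 0) ⁻¹' U
            = {x : ℝ | (x, f x) ∈ A}ᶜ := by
          ext x; by_cases hx : (x, f x) ∈ A <;> simp [hx, h0, h1]
        rw [this]; exact hS.compl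
      · have : (fun x => if (x, f x) ∈ A then (1:ℝ) else 0) ⁻¹' U = (∅ : Set ℝ) := by
          ext x; by_cases hx : (x, f x) ∈ A <;> simp [hx, h0, h1]
        rw [this]; exact isOpen_empty.baireMeasurableSet
    · intro hb
      apply hA
      have := hb (Set.Ioi (1/2)) isOpen_Ioi
      have heq : (fun p => if p ∈ A then (1:ℝ) else 0) ⁻¹' Set.Ioi (1/2) = A := by
        ext p
        by_cases hp : p ∈ A <;> simp [hp] <;> norm_num
      rwa [heq] at this
  tfae_have 4 → 1 := by
    rintro ⟨F, -, hsup, hnb⟩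
    exact ⟨F, hsup, hnb⟩
  tfae_finish
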